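/- The series sum over k≥1 of 1/(2^(k+2)·(2k-1)·k²·(2k+1)) equals 1/2 + (1/8)ln²(2) - π²/48 - (1/(2√2))·ln(1+√2). -/

import Mathlib

open MeasureTheory Real Set Filter Topology intervalIntegral

noncomputable def Tval : ℝ := ∑' m : ℕ, (1/2:ℝ)^(m+1)/((m:ℝ)+1)^2

lemma summable_base : Summable (fun m : ℕ => (1:ℝ)/((m:ℝ)+1)^2) := by
  have := Real.summable_one_div_nat_pow.mpr (by norm_num : 1 < 2)
  rw [← summable_nat_add_iff 1] at this
  simpa using this

lemma summable_T : Summable (fun m : ℕ => (1/2:ℝ)^(m+1)/((m:ℝ)+1)^2) := by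
  refine Summable.of_nonneg_of_le (fun m => by positivity) (fun m => ?_) summable_base
  rw [div_le_div_iff₀ (by positivity) (by positivity)]
  have h1 : ((1:ℝ)/2)^(m+1) ≤ 1 := by
    apply pow_le_one₀ <;> norm_num
  nlinarith [sq_nonneg ((m:ℝ)+1)]

lemma eval1 (m : ℕ) : ∫ t in Ioc ((1:ℝ)/2) 1, t^m/((m:ℝ)+1) =
    (1 - (1/2:ℝ)^(m+1))/((m:ℝ)+1)^2 := by
  rw [← intervalIntegral.integral_of_le (by norm_num : (1:ℝ)/2 ≤ 1)]
  rw [intervalIntegral.integral_div, integral_pow, one_pow, div_div, ← pow_two]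

lemma eval2 (m : ℕ) : ∫ t in Ioc ((1:ℝ)/2) 1, (1-t)^m/((m:ℝ)+1) =
    ((1/2:ℝ)^(m+1))/((m:ℝ)+1)^2 := by
  rw [← intervalIntegral.integral_of_le (by norm_num : (1:ℝ)/2 ≤ 1)]
  rw [intervalIntegral.integral_div]
  rw [intervalIntegral.integral_comp_sub_left (fun u => u^m) 1]
  norm_num [integral_pow, div_div, ← pow_two]

-- generic swap lemma
lemma swap_int (g : ℕ → ℝ → ℝ) (hg : ∀ m, Continuous (g m))
    (hnn : ∀ m, ∀ t ∈ Ioc ((1:ℝ)/2) 1, 0 ≤ g m t)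
    (val : ℕ → ℝ) (hval : ∀ m, ∫ t in Ioc ((1:ℝ)/2) 1, g m t = val m)
    (hsum : Summable val) :
    ∑' m, val m = ∫ t in Ioc ((1:ℝ)/2) 1, ∑' m, g m t := by
  have h1 : ∀ m : ℕ, IntegrableOn (g m) (Ioc ((1:ℝ)/2) 1) :=
    fun m => (hg m).integrableOn_Ioc
  have h2 : Summable (fun m => ∫ t in Ioc ((1:ℝ)/2) 1, ‖g m t‖) := by
    have : ∀ m, (∫ t in Ioc ((1:ℝ)/2) 1, ‖g m t‖) = val m := by
      intro m
      rw [← hval m]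
      refine setIntegral_congr_fun measurableSet_Ioc (fun t ht => ?_)
      exact Real.norm_of_nonneg (hnn m t ht)
    rw [funext this]
    exact hsum
  have := MeasureTheory.integral_tsum_of_summable_integral_norm h1 h2
  rw [← this]
  exact tsum_congr (fun m => (hval m).symm)

lemma ptws1 {t : ℝ} (h1 : 1/2 < t) (h2 : t < 1) :
    (∑' m : ℕ, t^m/((m:ℝ)+1)) = -Real.log (1-t)/t := by
  have ht0 : t ≠ 0 := by linarith
  have habs : |t| < 1 := abs_lt.2 ⟨by linarith, h2⟩
  have hs := (Real.hasSum_pow_div_log_of_abs_lt_one habs).div_const t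
  have hfun : (fun n : ℕ => t^(n+1)/((n:ℝ)+1)/t) = fun n : ℕ => t^n/((n:ℝ)+1) := by
    funext n
    rw [pow_succ]
    field_simp
  rw [hfun] at hs
  simpa [neg_div] using hs.tsum_eq

lemma ptws2 {t : ℝ} (h1 : 1/2 < t) (h2 : t < 1) :
    (∑' m : ℕ, (1-t)^m/((m:ℝ)+1)) = -Real.log t/(1-t) := by
  have ht0 : (1:ℝ) - t ≠ 0 := by linarith
  have habs : |1-t| < 1 := abs_lt.2 ⟨by linarith, by linarith⟩
  have hs := (Real.hasSum_pow_div_log_of_abs_lt_one habs).div_const (1-t)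
  have hfun : (fun n : ℕ => (1-t)^(n+1)/((n:ℝ)+1)/(1-t)) = fun n : ℕ => (1-t)^n/((n:ℝ)+1) := by
    funext n
    rw [pow_succ]
    field_simp
  rw [hfun] at hs
  have : (1:ℝ) - (1-t) = t := by ring
  rw [this] at hs
  simpa [neg_div] using hs.tsum_eq

lemma ae_ne_one : ∀ᵐ (t : ℝ), t ≠ 1 := by
  simp [ae_iff]

lemma zeta_shift : (∑' m : ℕ, (1:ℝ)/((m:ℝ)+1)^2) = π^2/6 := by
  have := hasSum_zeta_two
  rw [← hasSum_nat_add_iff' 1] at this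
  exact (by simpa using this : HasSum (fun n : ℕ => (1:ℝ)/((n:ℝ)+1)^2) (π^2/6)).tsum_eq

lemma int1 : ∫ t in Ioc ((1:ℝ)/2) 1, (-Real.log (1-t)/t) = π^2/6 - Tval := by
  have hsum : Summable (fun m : ℕ => (1 - (1/2:ℝ)^(m+1))/((m:ℝ)+1)^2) := by
    refine (summable_base.sub summable_T).congr (fun m => ?_)
    rw [div_sub_div_same]
  have hswap := swap_int (fun m t => t^m/((m:ℝ)+1))
    (fun m => by continuity)
    (fun m t ht => by
      have : (0:ℝ) < t := lt_trans (by norm_num) ht.1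
      positivity)
    _ eval1 hsum
  have e : ∫ t in Ioc ((1:ℝ)/2) 1, (∑' m : ℕ, t^m/((m:ℝ)+1))
      = ∫ t in Ioc ((1:ℝ)/2) 1, (-Real.log (1-t)/t) := by
    refine setIntegral_congr_ae measurableSet_Ioc ?_
    filter_upwards [ae_ne_one] with t ht hmem
    exact ptws1 hmem.1 (lt_of_le_of_ne hmem.2 ht)
  rw [← e, ← hswap]
  have h2 : (fun m : ℕ => ((1:ℝ) - (1/2:ℝ)^(m+1))/((m:ℝ)+1)^2)
      = (fun m : ℕ => (1:ℝ)/((m:ℝ)+1)^2 - (1/2:ℝ)^(m+1)/((m:ℝ)+1)^2) :=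
    funext (fun m => by rw [div_sub_div_same])
  rw [h2, Summable.tsum_sub summable_base summable_T, zeta_shift]
  rfl

lemma int2 : ∫ t in Ioc ((1:ℝ)/2) 1, (-Real.log t/(1-t)) = Tval := by
  have hswap := swap_int (fun m t => (1-t)^m/((m:ℝ)+1))
    (fun m => by continuity)
    (fun m t ht => by
      have : (0:ℝ) ≤ 1 - t := by simpa using ht.2
      positivity)
    _ eval2 summable_T
  have e : ∫ t in Ioc ((1:ℝ)/2) 1, (∑' m : ℕ, (1-t)^m/((m:ℝ)+1))
      = ∫ t in Ioc ((1:ℝ)/2) 1, (-Real.log t/(1-t)) := by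
    refine setIntegral_congr_ae measurableSet_Ioc ?_
    filter_upwards [ae_ne_one] with t ht hmem
    exact ptws2 hmem.1 (lt_of_le_of_ne hmem.2 ht)
  rw [← e, ← hswap]
  rfl


lemma neg_log_le_sqrt {y : ℝ} (hy : 0 < y) : -Real.log y ≤ 2 / Real.sqrt y := by
  have hs : 0 < Real.sqrt y := Real.sqrt_pos.2 hy
  have h := Real.log_le_sub_one_of_pos (inv_pos.2 hs)
  rw [Real.log_inv, Real.log_sqrt hy.le] at h
  rw [div_eq_mul_inv]
  nlinarith

lemma neg_log_le_lin {t : ℝ} (h1 : 1/2 ≤ t) (h2 : t ≤ 1) : -Real.log t ≤ 2 * (1 - t) := by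
  have ht : (0:ℝ) < t := by linarith
  have h := Real.log_le_sub_one_of_pos (inv_pos.2 ht)
  rw [Real.log_inv] at h
  have e : t⁻¹ - 1 = (1-t)/t := by field_simp
  rw [e, le_div_iff₀ ht] at h
  have hnn : 0 ≤ -Real.log t := by
    simpa using Real.log_nonpos ht.le h2
  nlinarith [mul_nonneg hnn (by linarith : (0:ℝ) ≤ 2*t - 1)]

lemma intF : IntegrableOn (fun t : ℝ => -Real.log (1-t)/t) (Ioc ((1:ℝ)/2) 1) := by
  have hg : IntervalIntegrable (fun x : ℝ => x ^ (-(1/2):ℝ)) volume 0 (1/2) :=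
    intervalIntegral.intervalIntegrable_rpow' (by norm_num)
  have hg2 := ((hg.comp_sub_left 1).const_mul 4).symm
  norm_num at hg2
  have hgint : IntegrableOn (fun x : ℝ => 4 * (1-x) ^ (-(1/2):ℝ)) (Ioc ((1:ℝ)/2) 1) :=
    (intervalIntegrable_iff_integrableOn_Ioc_of_le (by norm_num)).1 hg2
  refine Integrable.mono' hgint ?_ ?_
  · exact (((Real.measurable_log.comp (measurable_const.sub measurable_id)).neg.div
      measurable_id).aestronglyMeasurable).restrict
  · rw [ae_restrict_iff' measurableSet_Ioc]
    filter_upwards with t ht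
    rcases eq_or_lt_of_le ht.2 with h1 | h1
    · subst h1
      rw [show (1:ℝ)-1 = 0 by ring]
      simp only [Real.log_zero, neg_zero, zero_div, norm_zero]
      positivity
    · have hy : (0:ℝ) < 1 - t := by linarith
      have ht0 : (0:ℝ) < t := by linarith [ht.1]
      have hnn : 0 ≤ -Real.log (1-t) := by
        simpa using Real.log_nonpos hy.le (by linarith)
      have hb1 : -Real.log (1-t)/t ≤ 2 * (-Real.log (1-t)) := by
        rw [div_le_iff₀ ht0]
        nlinarith [ht.1]
      have hb2 : -Real.log (1-t) ≤ 2 / Real.sqrt (1-t) := neg_log_le_sqrt hy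
      have hrw : (1-t) ^ (-(1/2):ℝ) = 1 / Real.sqrt (1-t) := by
        rw [Real.rpow_neg hy.le, ← Real.sqrt_eq_rpow, one_div]
      rw [Real.norm_eq_abs, abs_of_nonneg (by positivity), hrw]
      calc -Real.log (1-t)/t ≤ 2 * (-Real.log (1-t)) := hb1
        _ ≤ 2 * (2 / Real.sqrt (1-t)) := by linarith
        _ = 4 * (1 / Real.sqrt (1-t)) := by ring

lemma intH : IntegrableOn (fun t : ℝ => -Real.log t/(1-t)) (Ioc ((1:ℝ)/2) 1) := by
  have hc : IntegrableOn (fun _ : ℝ => (2:ℝ)) (Ioc ((1:ℝ)/2) 1) volume :=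
    integrableOn_const measure_Ioc_lt_top.ne
  refine Integrable.mono' hc ?_ ?_
  · exact ((Real.measurable_log.neg.div
      (measurable_const.sub measurable_id)).aestronglyMeasurable).restrict
  · rw [ae_restrict_iff' measurableSet_Ioc]
    filter_upwards with t ht
    rcases eq_or_lt_of_le ht.2 with h1 | h1
    · subst h1
      norm_num
    · have hy : (0:ℝ) < 1 - t := by linarith
      have ht0 : (0:ℝ) < t := by linarith [ht.1]
      have hnn : 0 ≤ -Real.log t := by
        simpa using Real.log_nonpos ht0.le (by linarith)
      have hb := neg_log_le_lin (le_of_lt ht.1) ht.2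
      rw [Real.norm_eq_abs, abs_of_nonneg (by positivity), div_le_iff₀ hy]
      nlinarith

lemma phi_cont : ContinuousOn (fun t : ℝ => -(Real.log t * Real.log (1-t))) (Icc ((1:ℝ)/2) 1) := by
  intro t ht
  rcases eq_or_lt_of_le ht.2 with h1 | h1
  · subst h1
    rw [← continuousWithinAt_diff_self]
    have hphi1 : (fun t : ℝ => -(Real.log t * Real.log (1-t))) 1 = 0 := by simp
    unfold ContinuousWithinAt
    rw [hphi1]
    have h0 : Tendsto (fun t : ℝ => 1 - t) (𝓝[Icc ((1:ℝ)/2) 1 \ {1}] 1) (𝓝[>] (0:ℝ)) := by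
      apply tendsto_nhdsWithin_of_tendsto_nhds_of_eventually_within
      · have hc : Continuous (fun t : ℝ => 1 - t) := continuous_const.sub continuous_id
        have := hc.tendsto (1:ℝ)
        simp only [sub_self] at this
        exact this.mono_left nhdsWithin_le_nhds
      · filter_upwards [self_mem_nhdsWithin] with s hs
        have : s ≤ 1 := hs.1.2
        have : s ≠ 1 := hs.2
        simp only [Set.mem_Ioi]
        cases lt_or_eq_of_le hs.1.2 with
        | inl h => linarith
        | inr h => exact absurd h hs.2
    have hmain : Tendsto (fun t : ℝ => Real.log (1-t) * (1-t))
        (𝓝[Icc ((1:ℝ)/2) 1 \ {1}] 1) (𝓝 0) := by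
      have hlog := tendsto_log_mul_rpow_nhdsGT_zero one_pos
      simp only [Real.rpow_one] at hlog
      exact hlog.comp h0
    have hg := hmain.norm.const_mul (2:ℝ)
    simp only [norm_zero, mul_zero] at hg
    refine squeeze_zero_norm' ?_ hg
    filter_upwards [self_mem_nhdsWithin] with s hs
    have hs1 : s < 1 := lt_of_le_of_ne hs.1.2 hs.2
    have hs2 : (1:ℝ)/2 ≤ s := hs.1.1
    have h1 : |Real.log s| ≤ 2 * (1-s) := by
      rw [abs_of_nonpos (Real.log_nonpos (by linarith) (by linarith))]
      exact neg_log_le_lin hs2 hs.1.2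
    calc ‖-(Real.log s * Real.log (1-s))‖ = |Real.log s| * |Real.log (1-s)| := by
          rw [norm_neg, Real.norm_eq_abs, abs_mul]
      _ ≤ (2*(1-s)) * |Real.log (1-s)| := by
          apply mul_le_mul_of_nonneg_right h1 (abs_nonneg _)
      _ = 2 * ‖Real.log (1-s) * (1-s)‖ := by
          rw [Real.norm_eq_abs, abs_mul, abs_of_nonneg (by linarith : (0:ℝ) ≤ 1-s)]
          ring
  · have ht0 : t ≠ 0 := by
      have := ht.1; intro h; rw [h] at this; norm_num at this
    have ht1 : (1:ℝ) - t ≠ 0 := by intro h; nlinarith [h1]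
    exact (((Real.continuousAt_log ht0).mul
      ((Real.continuousAt_log ht1).comp
        ((continuous_const.sub continuous_id).continuousAt))).neg).continuousWithinAt

lemma ftc_main : ∫ t in ((1:ℝ)/2)..1, (-Real.log (1-t)/t - (-Real.log t/(1-t)))
    = Real.log 2 ^ 2 := by
  have hderiv : ∀ x ∈ Ioo ((1:ℝ)/2) 1,
      HasDerivWithinAt (fun t : ℝ => -(Real.log t * Real.log (1-t)))
        (-Real.log (1-x)/x - (-Real.log x/(1-x))) (Ioi x) x := by
    intro x hx
    have hx0 : x ≠ 0 := by have := hx.1; intro h; rw [h] at this; norm_num at this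
    have hx1 : (1:ℝ) - x ≠ 0 := by have := hx.2; intro h; nlinarith
    have d2 : HasDerivAt (fun y : ℝ => 1 - y) (-1) x := by
      simpa using (hasDerivAt_id x).const_sub 1
    have d3 : HasDerivAt (fun y : ℝ => Real.log (1-y)) ((1-x)⁻¹ * (-1)) x :=
      (Real.hasDerivAt_log hx1).comp x d2
    have d4 := ((Real.hasDerivAt_log hx0).mul d3).neg
    have : -(x⁻¹ * Real.log (1-x) + Real.log x * ((1-x)⁻¹ * (-1)))
        = -Real.log (1-x)/x - (-Real.log x/(1-x)) := by
      field_simp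
      ring
    rw [this] at d4
    exact d4.hasDerivWithinAt
  have hint : IntervalIntegrable
      (fun t : ℝ => -Real.log (1-t)/t - (-Real.log t/(1-t))) volume ((1:ℝ)/2) 1 := by
    apply IntervalIntegrable.sub <;>
      rw [intervalIntegrable_iff_integrableOn_Ioc_of_le (by norm_num : (1:ℝ)/2 ≤ 1)]
    exacts [intF, intH]
  rw [intervalIntegral.integral_eq_sub_of_hasDeriv_right_of_le (by norm_num)
    phi_cont hderiv hint]
  have : Real.log (1 - 1/2 : ℝ) = -Real.log 2 := by
    rw [show (1:ℝ) - 1/2 = 2⁻¹ by norm_num, Real.log_inv]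
  rw [this]
  simp
  ring

lemma Tval_eq : Tval = π^2/12 - Real.log 2^2/2 := by
  have hF : IntervalIntegrable (fun t : ℝ => -Real.log (1-t)/t) volume ((1:ℝ)/2) 1 :=
    (intervalIntegrable_iff_integrableOn_Ioc_of_le (by norm_num)).2 intF
  have hH : IntervalIntegrable (fun t : ℝ => -Real.log t/(1-t)) volume ((1:ℝ)/2) 1 :=
    (intervalIntegrable_iff_integrableOn_Ioc_of_le (by norm_num)).2 intH
  have h3 : ∫ t in ((1:ℝ)/2)..1, (-Real.log (1-t)/t - (-Real.log t/(1-t)))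
      = (π^2/6 - Tval) - Tval := by
    rw [intervalIntegral.integral_sub hF hH]
    rw [intervalIntegral.integral_of_le (by norm_num : (1:ℝ)/2 ≤ 1)]
    rw [intervalIntegral.integral_of_le (by norm_num : (1:ℝ)/2 ≤ 1)]
    rw [int1, int2]
  rw [ftc_main] at h3
  linarith

lemma Tval_def : Tval = ∑' m : ℕ, (1/2:ℝ)^(m+1)/((m:ℝ)+1)^2 := rfl

theorem stmt_10 :
    ∑' k : ℕ, 1 / (2 ^ (k + 3) * (2 * (k : ℝ) + 1) * (k + 1) ^ 2 * (2 * k + 3)) =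
      1 / 2 + (1 / 8) * Real.log 2 ^ 2 - Real.pi ^ 2 / 48
        - (1 / (2 * Real.sqrt 2)) * Real.log (1 + Real.sqrt 2) := by
  set x : ℝ := (Real.sqrt 2)⁻¹ with hxdef
  have hsq : Real.sqrt 2 ^ 2 = 2 := Real.sq_sqrt (by norm_num)
  have hs0 : (0:ℝ) < Real.sqrt 2 := Real.sqrt_pos.2 (by norm_num)
  have hs1 : (1:ℝ) < Real.sqrt 2 := by nlinarith
  have hx0 : 0 < x := inv_pos.2 hs0
  have hx2 : x^2 = 1/2 := by
    rw [hxdef, inv_pow, hsq]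
    norm_num
  have habs : |x| < 1 := by
    rw [abs_of_pos hx0]
    rw [hxdef, inv_lt_one_iff₀]
    right; exact hs1
  have hL : Real.log (1+x) - Real.log (1-x) = 2 * Real.log (1 + Real.sqrt 2) := by
    have h1 : (1:ℝ) + x = (Real.sqrt 2 + 1)/Real.sqrt 2 := by
      rw [hxdef]; field_simp
    have h2 : (1:ℝ) - x = (Real.sqrt 2 - 1)/Real.sqrt 2 := by
      rw [hxdef]; field_simp
    have hm : (Real.sqrt 2 - 1) * (Real.sqrt 2 + 1) = 1 := by nlinarith
    have hne1 : Real.sqrt 2 + 1 ≠ 0 := by positivity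
    have hne2 : Real.sqrt 2 - 1 ≠ 0 := by
      intro h; rw [h] at hm; simp at hm
    have hlm : Real.log (Real.sqrt 2 - 1) + Real.log (Real.sqrt 2 + 1) = 0 := by
      rw [← Real.log_mul hne2 hne1, hm, Real.log_one]
    rw [h1, h2, Real.log_div hne1 hs0.ne', Real.log_div hne2 hs0.ne']
    rw [show (1:ℝ) + Real.sqrt 2 = Real.sqrt 2 + 1 by ring]
    linarith
  have hs := Real.hasSum_log_sub_log_of_abs_lt_one habs
  set L : ℝ := Real.log (1+x) - Real.log (1-x) with hLdef
  -- series A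
  have hA : HasSum (fun k : ℕ => 2 * (1/(2*(k:ℝ)+1)) * ((1:ℝ)/2)^(k+3)) (x^5 * L) := by
    have := hs.mul_left (x^5)
    refine this.congr_fun fun k => Eq.symm ?_
    have e : x^5 * x^(2*k+1) = ((1:ℝ)/2)^(k+3) := by
      rw [← pow_add, show 5 + (2*k+1) = 2*(k+3) by ring, pow_mul, hx2]
    calc x^5 * (2 * (1/(2*(k:ℝ)+1)) * x^(2*k+1))
        = 2 * (1/(2*(k:ℝ)+1)) * (x^5 * x^(2*k+1)) := by ring
      _ = 2 * (1/(2*(k:ℝ)+1)) * ((1:ℝ)/2)^(k+3) := by rw [e]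
  -- series B
  have hB : HasSum (fun k : ℕ => ((1:ℝ)/2)^(k+3)/((k:ℝ)+1)^2) (Tval/4) := by
    have hT : HasSum (fun m : ℕ => (1/2:ℝ)^(m+1)/((m:ℝ)+1)^2) Tval := by
      rw [Tval_def]; exact summable_T.hasSum
    have := hT.mul_left (1/4)
    rw [show (1:ℝ)/4 * Tval = Tval/4 by ring] at this
    refine this.congr_fun fun k => ?_
    rw [show k+3 = (k+1)+2 from rfl, pow_add]
    ring
  -- series C
  have hC : HasSum (fun k : ℕ => 2 * (1/(2*(k:ℝ)+3)) * ((1:ℝ)/2)^(k+3)) (x^3 * L - 1/2) := by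
    have hC0 : HasSum (fun k : ℕ => 2 * (1/(2*(k:ℝ)+1)) * ((1:ℝ)/2)^(k+2)) (x^3 * L) := by
      have := hs.mul_left (x^3)
      refine this.congr_fun fun k => Eq.symm ?_
      have e : x^3 * x^(2*k+1) = ((1:ℝ)/2)^(k+2) := by
        rw [← pow_add, show 3 + (2*k+1) = 2*(k+2) by ring, pow_mul, hx2]
      calc x^3 * (2 * (1/(2*(k:ℝ)+1)) * x^(2*k+1))
          = 2 * (1/(2*(k:ℝ)+1)) * (x^3 * x^(2*k+1)) := by ring
        _ = 2 * (1/(2*(k:ℝ)+1)) * ((1:ℝ)/2)^(k+2) := by rw [e]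
    have := (hasSum_nat_add_iff' 1).2 hC0
    simp only [Finset.sum_range_one] at this
    norm_num at this
    refine this.congr_fun fun k => ?_
    push_cast
    ring_nf
  -- combine
  have hTot := (hA.sub hB).sub hC
  have hid : (fun k : ℕ => 2 * (1/(2*(k:ℝ)+1)) * ((1:ℝ)/2)^(k+3)
      - ((1:ℝ)/2)^(k+3)/((k:ℝ)+1)^2 - 2 * (1/(2*(k:ℝ)+3)) * ((1:ℝ)/2)^(k+3))
      = fun k : ℕ => 1 / (2 ^ (k + 3) * (2 * (k : ℝ) + 1) * (k + 1) ^ 2 * (2 * k + 3)) := by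
    funext k
    have h1 : ((1:ℝ)/2)^(k+3) = ((2:ℝ)^(k+3))⁻¹ := by
      rw [one_div, inv_pow]
    have h2 : ((2:ℝ))^(k+3) ≠ 0 := by positivity
    have h3 : (2*(k:ℝ)+1) ≠ 0 := by positivity
    have h4 : ((k:ℝ)+1) ≠ 0 := by positivity
    have h5 : (2*(k:ℝ)+3) ≠ 0 := by positivity
    rw [h1]
    field_simp
    ring
  rw [hid] at hTot
  rw [hTot.tsum_eq, hL, Tval_eq]
  have hx5 : x^5 = x/4 := by linear_combination (x^3 + x/2) * hx2
  have hx3 : x^3 = x/2 := by linear_combination x * hx2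
  have hhalf : (1:ℝ)/(2*Real.sqrt 2) = x/2 := by
    rw [hxdef]; field_simp
  rw [hhalf]
  linear_combination (2*Real.log (1+Real.sqrt 2)) * hx5 - (2*Real.log (1+Real.sqrt 2)) * hx3
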